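/- Let F be a positive C² function on an open rectangle D = D₁ × ⋯ × Dₙ ⊆ ℝⁿ. Then F is MTP₂ on D (i.e., F(x∨y)F(x∧y) ≥ F(x)F(y) for all x, y ∈ D) if and only if ∂²/∂xᵢ∂xⱼ (log F) ≥ 0 on D for all i ≠ j. -/

import Mathlib

open Function Set Filter Topology

lemma mtp2_upd_hasDerivAt {n : ℕ} (z : Fin n → ℝ) (i : Fin n) (t : ℝ) :
    HasDerivAt (fun s => Function.update z i s) (Pi.single i 1 : Fin n → ℝ) t := by
  have h : (fun s : ℝ => Function.update z i s)
      = fun s => Function.update z i 0 + s • (Pi.single i 1 : Fin n → ℝ) := by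
    funext s; funext k
    by_cases hk : k = i
    · subst hk; simp
    · simp [Function.update_of_ne hk, Pi.single_eq_of_ne hk]
  rw [h]
  simpa using ((hasDerivAt_id t).smul_const (Pi.single i 1 : Fin n → ℝ)).const_add
    (Function.update z i 0)

lemma mtp2_comp_upd_hasDerivAt {n : ℕ} {f : (Fin n → ℝ) → ℝ} {z : Fin n → ℝ} {i : Fin n} {t : ℝ}
    (hf : DifferentiableAt ℝ f (Function.update z i t)) :
    HasDerivAt (fun s => f (Function.update z i s))
      (fderiv ℝ f (Function.update z i t) (Pi.single i 1)) t :=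
  hf.hasFDerivAt.comp_hasDerivAt t (mtp2_upd_hasDerivAt z i t)

lemma mtp2_mem_upd {n : ℕ} {Ds : Fin n → Set ℝ} {z : Fin n → ℝ} (hz : z ∈ Set.univ.pi Ds)
    {i : Fin n} {t : ℝ} (ht : t ∈ Ds i) : Function.update z i t ∈ Set.univ.pi Ds := by
  intro k _
  by_cases hk : k = i
  · subst hk; simpa
  · simpa [Function.update_of_ne hk] using hz k trivial

lemma mtp2_mem_sup {n : ℕ} {Ds : Fin n → Set ℝ} {x y : Fin n → ℝ}
    (hx : x ∈ Set.univ.pi Ds) (hy : y ∈ Set.univ.pi Ds) : x ⊔ y ∈ Set.univ.pi Ds := by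
  intro k _
  rcases le_total (x k) (y k) with h | h
  · simpa [Pi.sup_apply, sup_eq_right.mpr h] using hy k trivial
  · simpa [Pi.sup_apply, sup_eq_left.mpr h] using hx k trivial

lemma mtp2_mem_inf {n : ℕ} {Ds : Fin n → Set ℝ} {x y : Fin n → ℝ}
    (hx : x ∈ Set.univ.pi Ds) (hy : y ∈ Set.univ.pi Ds) : x ⊓ y ∈ Set.univ.pi Ds := by
  intro k _
  rcases le_total (x k) (y k) with h | h
  · simpa [Pi.inf_apply, inf_eq_left.mpr h] using hx k trivial
  · simpa [Pi.inf_apply, inf_eq_right.mpr h] using hy k trivial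

lemma mtp2_mono_of_hasDerivAt {f f' : ℝ → ℝ} {s : Set ℝ} (hs : IsOpen s)
    (hconv : Convex ℝ s) (hf : ∀ t ∈ s, HasDerivAt f (f' t) t)
    (h0 : ∀ t ∈ s, 0 ≤ f' t) : MonotoneOn f s := by
  apply monotoneOn_of_deriv_nonneg hconv
  · exact fun t ht => (hf t ht).differentiableAt.continuousAt.continuousWithinAt
  · rw [hs.interior_eq]
    exact fun t ht => (hf t ht).differentiableAt.differentiableWithinAt
  · rw [hs.interior_eq]
    intro t ht
    rw [(hf t ht).deriv]
    exact h0 t ht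

lemma mtp2_deriv_nonneg_of_monotoneOn {f : ℝ → ℝ} {s : Set ℝ} (hs : IsOpen s) {t d : ℝ}
    (ht : t ∈ s) (hm : MonotoneOn f s) (hd : HasDerivAt f d t) : 0 ≤ d := by
  have h1 : Tendsto (slope f t) (𝓝[>] t) (𝓝 d) :=
    (hasDerivAt_iff_tendsto_slope.mp hd).mono_left
      (nhdsWithin_mono _ (fun u hu => ne_of_gt hu))
  refine ge_of_tendsto h1 ?_
  filter_upwards [self_mem_nhdsWithin, mem_nhdsWithin_of_mem_nhds (hs.mem_nhds ht)]
    with u hu1 hu2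
  rw [slope_def_field]
  exact div_nonneg (sub_nonneg.2 (hm ht hu2 (le_of_lt hu1))) (le_of_lt (sub_pos.2 hu1))

lemma mtp2_le_of_slopes {f₀ f₁ : ℝ → ℝ} {t d₀ d₁ : ℝ} {s : Set ℝ} (hs : IsOpen s) (ht : t ∈ s)
    (h0 : HasDerivAt f₀ d₀ t) (h1 : HasDerivAt f₁ d₁ t)
    (hle : ∀ u ∈ s, t < u → f₀ u - f₀ t ≤ f₁ u - f₁ t) : d₀ ≤ d₁ := by
  have h2 : Tendsto (fun u => slope f₁ t u - slope f₀ t u) (𝓝[>] t) (𝓝 (d₁ - d₀)) :=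
    ((hasDerivAt_iff_tendsto_slope.mp h1).sub (hasDerivAt_iff_tendsto_slope.mp h0)).mono_left
      (nhdsWithin_mono _ (fun u hu => ne_of_gt hu))
  have h3 : 0 ≤ d₁ - d₀ := by
    refine ge_of_tendsto h2 ?_
    filter_upwards [self_mem_nhdsWithin, mem_nhdsWithin_of_mem_nhds (hs.mem_nhds ht)]
      with u hu1 hu2
    rw [slope_def_field, slope_def_field, sub_nonneg]
    have h4 := hle u hu2 hu1
    have h5 : (0:ℝ) < u - t := sub_pos.2 hu1
    gcongr
  linarith

/-- MTP₂ characterization: a positive C² function on an open rectangle is MTP₂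
iff all mixed second partial derivatives of its logarithm are nonnegative. -/
theorem stmt_2 {n : ℕ} (Ds : Fin n → Set ℝ)
    (hopen : ∀ i, IsOpen (Ds i)) (hconn : ∀ i, (Ds i).OrdConnected)
    (F : (Fin n → ℝ) → ℝ)
    (hFpos : ∀ x ∈ Set.univ.pi Ds, 0 < F x)
    (hFC2 : ContDiffOn ℝ 2 F (Set.univ.pi Ds)) :
    (∀ x ∈ Set.univ.pi Ds, ∀ y ∈ Set.univ.pi Ds, F x * F y ≤ F (x ⊔ y) * F (x ⊓ y)) ↔
    (∀ i j : Fin n, i ≠ j → ∀ x ∈ Set.univ.pi Ds,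
      0 ≤ fderiv ℝ (fun z => fderiv ℝ (fun w => Real.log (F w)) z (Pi.single i 1)) x
            (Pi.single j 1)) := by
  have hD : IsOpen (Set.univ.pi Ds) := isOpen_set_pi finite_univ fun i _ => hopen i
  set D := Set.univ.pi Ds with hD_def
  set g : (Fin n → ℝ) → ℝ := fun w => Real.log (F w) with hg_def
  have hg2 : ContDiffOn ℝ 2 g D := hFC2.log (fun z hz => (hFpos z hz).ne')
  have hgd : DifferentiableOn ℝ g D := hg2.differentiableOn (by norm_num)
  have hgdA : ∀ z ∈ D, DifferentiableAt ℝ g z := fun z hz =>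
    hgd.differentiableAt (hD.mem_nhds hz)
  have hg' : ContDiffOn ℝ 1 (fderiv ℝ g) D := hg2.fderiv_of_isOpen hD (by norm_num)
  have hGd : ∀ v : Fin n → ℝ, ∀ z ∈ D, DifferentiableAt ℝ (fun w => fderiv ℝ g w v) z := by
    intro v z hz
    have h1 : DifferentiableAt ℝ (fderiv ℝ g) z :=
      (hg'.differentiableOn (by norm_num)).differentiableAt (hD.mem_nhds hz)
    exact ((ContinuousLinearMap.apply ℝ ℝ v).differentiable.differentiableAt).comp z h1
  constructor
  · -- MTP₂ → mixed partials nonneg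
    intro hmtp i j hij x hx
    have hsupg : ∀ u ∈ D, ∀ v ∈ D, g u + g v ≤ g (u ⊔ v) + g (u ⊓ v) := by
      intro u hu v hv
      have h1 := hmtp u hu v hv
      have h2 : Real.log (F u * F v) ≤ Real.log (F (u ⊔ v) * F (u ⊓ v)) :=
        Real.log_le_log (mul_pos (hFpos u hu) (hFpos v hv)) h1
      rw [Real.log_mul (hFpos u hu).ne' (hFpos v hv).ne',
        Real.log_mul (hFpos _ (mtp2_mem_sup hu hv)).ne'
          (hFpos _ (mtp2_mem_inf hu hv)).ne'] at h2
      exact h2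
    have hmono : MonotoneOn
        (fun τ => fderiv ℝ g (Function.update x j τ) (Pi.single i 1)) (Ds j) := by
      intro t₀ ht₀ t₁ ht₁ hle01
      have hz₀ : Function.update x j t₀ ∈ D := mtp2_mem_upd hx ht₀
      have hz₁ : Function.update x j t₁ ∈ D := mtp2_mem_upd hx ht₁
      have hxiz₀ : (Function.update x j t₀) i = x i := Function.update_of_ne hij t₀ x
      have hxiz₁ : (Function.update x j t₁) i = x i := Function.update_of_ne hij t₁ x
      have e₀ : Function.update (Function.update x j t₀) i (x i) = Function.update x j t₀ := by
        conv_lhs => rw [← hxiz₀]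
        exact Function.update_eq_self i _
      have e₁ : Function.update (Function.update x j t₁) i (x i) = Function.update x j t₁ := by
        conv_lhs => rw [← hxiz₁]
        exact Function.update_eq_self i _
      have h0 : HasDerivAt (fun σ => g (Function.update (Function.update x j t₀) i σ))
          (fderiv ℝ g (Function.update x j t₀) (Pi.single i 1)) (x i) := by
        have := mtp2_comp_upd_hasDerivAt (f := g) (z := Function.update x j t₀) (i := i)
          (t := x i) (hgdA _ (by rw [e₀]; exact hz₀))
        rwa [e₀] at this
      have h1 : HasDerivAt (fun σ => g (Function.update (Function.update x j t₁) i σ))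
          (fderiv ℝ g (Function.update x j t₁) (Pi.single i 1)) (x i) := by
        have := mtp2_comp_upd_hasDerivAt (f := g) (z := Function.update x j t₁) (i := i)
          (t := x i) (hgdA _ (by rw [e₁]; exact hz₁))
        rwa [e₁] at this
      refine mtp2_le_of_slopes (hopen i) (hx i trivial) h0 h1 ?_
      intro u hui hu
      rw [e₀, e₁]
      have hsup_eq : Function.update (Function.update x j t₀) i u ⊔ Function.update x j t₁
          = Function.update (Function.update x j t₁) i u := by
        funext l
        by_cases hl : l = i
        · subst hl
          simp [Pi.sup_apply, Function.update_of_ne hij, sup_eq_left.mpr hu.le]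
        · by_cases hlj : l = j
          · subst hlj
            simp [Pi.sup_apply, Function.update_of_ne hl, sup_eq_right.mpr hle01]
          · simp [Pi.sup_apply, Function.update_of_ne hl, Function.update_of_ne hlj]
      have hinf_eq : Function.update (Function.update x j t₀) i u ⊓ Function.update x j t₁
          = Function.update x j t₀ := by
        funext l
        by_cases hl : l = i
        · subst hl
          simp [Pi.inf_apply, Function.update_of_ne hij, inf_eq_right.mpr hu.le]
        · by_cases hlj : l = j
          · subst hlj
            simp [Pi.inf_apply, Function.update_of_ne hl, inf_eq_left.mpr hle01]
          · simp [Pi.inf_apply, Function.update_of_ne hl, Function.update_of_ne hlj]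
      have h3 := hsupg (Function.update (Function.update x j t₀) i u)
        (mtp2_mem_upd hz₀ hui) (Function.update x j t₁) hz₁
      rw [hsup_eq, hinf_eq] at h3
      linarith
    have hkey : HasDerivAt (fun τ => fderiv ℝ g (Function.update x j τ) (Pi.single i 1))
        (fderiv ℝ (fun z => fderiv ℝ g z (Pi.single i 1))
          (Function.update x j (x j)) (Pi.single j 1)) (x j) :=
      mtp2_comp_upd_hasDerivAt (hGd _ _ (by rw [Function.update_eq_self]; exact hx))
    rw [Function.update_eq_self] at hkey
    exact mtp2_deriv_nonneg_of_monotoneOn (hopen j) (hx j trivial) hmono hkey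
  · -- mixed partials nonneg → MTP₂
    intro hmix x hx y hy
    -- pairwise supermodularity of g
    have pair : ∀ a ∈ D, ∀ i j : Fin n, i ≠ j → ∀ s ∈ Ds i, a i ≤ s → ∀ t ∈ Ds j, a j ≤ t →
        g (Function.update a i s) + g (Function.update a j t)
          ≤ g (Function.update (Function.update a i s) j t) + g a := by
      intro a ha i j hij s hs has t ht hat
      have hconvj : Convex ℝ (Ds j) := convex_iff_ordConnected.mpr (hconn j)
      have hconvi : Convex ℝ (Ds i) := convex_iff_ordConnected.mpr (hconn i)
      have hphi : MonotoneOn (fun τ => g (Function.update (Function.update a i s) j τ)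
            - g (Function.update a j τ)) (Ds j) := by
        apply mtp2_mono_of_hasDerivAt (hopen j) hconvj
          (f' := fun τ => fderiv ℝ g (Function.update (Function.update a i s) j τ) (Pi.single j 1)
            - fderiv ℝ g (Function.update a j τ) (Pi.single j 1))
        · intro τ hτ
          exact (mtp2_comp_upd_hasDerivAt (hgdA _ (mtp2_mem_upd (mtp2_mem_upd ha hs) hτ))).sub
            (mtp2_comp_upd_hasDerivAt (hgdA _ (mtp2_mem_upd ha hτ)))
        · intro τ hτ
          rw [sub_nonneg]
          have hwD : Function.update a j τ ∈ D := mtp2_mem_upd ha hτ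
          have hpsi : MonotoneOn
              (fun σ => fderiv ℝ g (Function.update (Function.update a j τ) i σ)
                (Pi.single j 1)) (Ds i) := by
            apply mtp2_mono_of_hasDerivAt (hopen i) hconvi
              (f' := fun σ => fderiv ℝ (fun z => fderiv ℝ g z (Pi.single j 1))
                (Function.update (Function.update a j τ) i σ) (Pi.single i 1))
            · intro σ hσ
              exact mtp2_comp_upd_hasDerivAt (hGd _ _ (mtp2_mem_upd hwD hσ))
            · intro σ hσ
              exact hmix j i hij.symm _ (mtp2_mem_upd hwD hσ)
          have h1 := hpsi (ha i trivial) hs has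
          beta_reduce at h1
          have e1 : Function.update (Function.update a j τ) i (a i)
              = Function.update a j τ := by
            have h2 : (Function.update a j τ) i = a i := Function.update_of_ne hij τ a
            conv_lhs => rw [← h2]
            exact Function.update_eq_self i _
          have e2 : Function.update (Function.update a j τ) i s
              = Function.update (Function.update a i s) j τ :=
            Function.update_comm hij.symm τ s a
          rw [e1, e2] at h1
          exact h1
      have h2 := hphi (ha j trivial) ht hat
      beta_reduce at h2
      have e3 : Function.update (Function.update a i s) j (a j) = Function.update a i s := by
        have h4 : (Function.update a i s) j = a j := Function.update_of_ne hij.symm s a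
        conv_lhs => rw [← h4]
        exact Function.update_eq_self j _
      have e4 : Function.update a j (a j) = a := Function.update_eq_self j a
      rw [e3, e4] at h2
      linarith
    -- single-coordinate difference inequality via induction over disagreement set
    have step : ∀ (T : Finset (Fin n)), ∀ u ∈ D, ∀ v ∈ D, u ≤ v →
        ∀ k, k ∉ T → (∀ l, l ≠ k → u l ≠ v l → l ∈ T) → u k = v k →
        ∀ c ∈ Ds k, u k ≤ c →
        g (Function.update u k c) - g u ≤ g (Function.update v k c) - g v := by
      intro T
      induction T using Finset.induction_on with
      | empty =>
        intro u hu v hv huv k hk hT huk c hc hkc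
        have huv' : u = v := funext fun l => by
          by_cases hl : l = k
          · rw [hl]; exact huk
          · by_contra h
            exact absurd (hT l hl h) (Finset.notMem_empty l)
        rw [huv']
      | @insert l T' hlT' ih =>
        intro u hu v hv huv k hk hT huk c hc hkc
        have hkl : k ≠ l := fun h => hk (h ▸ Finset.mem_insert_self l T')
        have hkT' : k ∉ T' := fun h => hk (Finset.mem_insert_of_mem h)
        by_cases hul : u l = v l
        · refine ih u hu v hv huv k hkT' ?_ huk c hc hkc
          intro l' hl' hne
          rcases Finset.mem_insert.mp (hT l' hl' hne) with h | h
          · subst h; exact absurd hul hne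
          · exact h
        · have hu'D : Function.update u l (v l) ∈ D := mtp2_mem_upd hu (hv l trivial)
          have hu'v : Function.update u l (v l) ≤ v := by
            intro m
            by_cases hm : m = l
            · subst hm; simp
            · rw [Function.update_of_ne hm]; exact huv m
          have hu'k : (Function.update u l (v l)) k = u k := Function.update_of_ne hkl _ u
          have h1 := ih (Function.update u l (v l)) hu'D v hv hu'v k hkT' ?_ ?_ c hc ?_
          · have h2 := pair u hu k l hkl c hc hkc (v l) (hv l trivial) (huv l)
            have e5 : Function.update (Function.update u k c) l (v l)
                = Function.update (Function.update u l (v l)) k c :=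
              Function.update_comm hkl c (v l) u
            rw [e5] at h2
            linarith
          · intro l' hl' hne
            by_cases h3 : l' = l
            · subst h3; simp at hne
            · rw [Function.update_of_ne h3] at hne
              rcases Finset.mem_insert.mp (hT l' hl' hne) with h | h
              · exact absurd h h3
              · exact h
          · rw [hu'k]; exact huk
          · rw [hu'k]; exact hkc
    -- full supermodularity by induction on the number of crossing coordinates
    have main : ∀ N : ℕ, ∀ p ∈ D, ∀ q ∈ D,
        (Finset.univ.filter fun i => q i < p i).card ≤ N →
        g p + g q ≤ g (p ⊔ q) + g (p ⊓ q) := by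
      intro N
      induction N with
      | zero =>
        intro p hp q hq hc
        have hpq : p ≤ q := by
          intro i
          by_contra h
          have hi : i ∈ Finset.univ.filter fun i => q i < p i := by
            simp [not_le.mp h]
          have := Finset.card_pos.mpr ⟨i, hi⟩
          omega
        rw [sup_eq_right.mpr hpq, inf_eq_left.mpr hpq]
        linarith
      | succ N ihN =>
        intro p hp q hq hc
        by_cases hex : ∃ k, q k < p k
        · obtain ⟨k, hk⟩ := hex
          have hq' : Function.update q k (p k) ∈ D := mtp2_mem_upd hq (hp k trivial)
          have hsupe : p ⊔ Function.update q k (p k) = p ⊔ q := by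
            funext l
            by_cases hl : l = k
            · subst hl
              simp [Pi.sup_apply, sup_eq_left.mpr hk.le]
            · simp [Pi.sup_apply, Function.update_of_ne hl]
          have hinfe : p ⊓ Function.update q k (p k)
              = Function.update (p ⊓ q) k (p k) := by
            funext l
            by_cases hl : l = k
            · subst hl; simp [Pi.inf_apply]
            · simp [Pi.inf_apply, Function.update_of_ne hl]
          have hcard : (Finset.univ.filter
              fun i => (Function.update q k (p k)) i < p i).card ≤ N := by
            have hsub : (Finset.univ.filter fun i => (Function.update q k (p k)) i < p i)
                ⊆ (Finset.univ.filter fun i => q i < p i).erase k := by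
              intro m hm
              simp only [Finset.mem_filter, Finset.mem_univ, true_and] at hm
              by_cases hmk : m = k
              · subst hmk; simp at hm
              · refine Finset.mem_erase.mpr ⟨hmk, ?_⟩
                simp only [Finset.mem_filter, Finset.mem_univ, true_and]
                rwa [Function.update_of_ne hmk] at hm
            have hkmem : k ∈ Finset.univ.filter fun i => q i < p i := by simp [hk]
            have h6 := Finset.card_le_card hsub
            rw [Finset.card_erase_of_mem hkmem] at h6
            omega
          have h1 := ihN p hp (Function.update q k (p k)) hq' hcard
          rw [hsupe, hinfe] at h1
          have hinfk : (p ⊓ q) k = q k := inf_eq_right.mpr hk.le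
          have h2 := step (Finset.univ.filter fun l => (p ⊓ q) l ≠ q l)
            (p ⊓ q) (mtp2_mem_inf hp hq) q hq inf_le_right k
            (by simp only [Finset.mem_filter, Finset.mem_univ, true_and, not_not]; exact hinfk)
            (fun l' _ hne => Finset.mem_filter.mpr ⟨Finset.mem_univ _, hne⟩) hinfk (p k)
            (hp k trivial) (by rw [hinfk]; exact hk.le)
          linarith
        · push_neg at hex
          have hpq : p ≤ q := fun i => hex i
          rw [sup_eq_right.mpr hpq, inf_eq_left.mpr hpq]
          linarith
    have hsm := main (Finset.univ.filter fun i => y i < x i).card x hx y hy le_rfl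
    have hFx := hFpos x hx
    have hFy := hFpos y hy
    have hFs := hFpos _ (mtp2_mem_sup hx hy)
    have hFi := hFpos _ (mtp2_mem_inf hx hy)
    calc F x * F y = Real.exp (g x + g y) := by
          rw [hg_def, Real.exp_add, Real.exp_log hFx, Real.exp_log hFy]
      _ ≤ Real.exp (g (x ⊔ y) + g (x ⊓ y)) := Real.exp_le_exp.mpr hsm
      _ = F (x ⊔ y) * F (x ⊓ y) := by
          rw [hg_def, Real.exp_add, Real.exp_log hFs, Real.exp_log hFi]
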